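/- For s in a fixed vertical strip with σ = Re s bounded and t = Im s → +∞, and for r in a fixed bounded set of ℂ, one has Γ(s+ir)Γ(s−ir) = −2πi · t^{2σ−1+2it} · exp(πiσ − 2it − πt) · (1 + O(t^{−1})), where the implied constant depends on σ and the bound on r. -/

import Mathlib

open Complex Real

open MeasureTheory Filter Set Topology


noncomputable def Qf (x : ℝ) : ℝ := Int.fract x * (1 - Int.fract x) / 2

lemma Qf_nonneg (x : ℝ) : 0 ≤ Qf x := by
  have h1 := Int.fract_nonneg x
  have h2 := (Int.fract_lt_one x).le
  unfold Qf; nlinarith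

lemma Qf_le (x : ℝ) : Qf x ≤ 8⁻¹ := by
  have h1 := Int.fract_nonneg x
  have h2 := (Int.fract_lt_one x).le
  unfold Qf; nlinarith [sq_nonneg (Int.fract x - 1/2)]

lemma Qf_measurable : Measurable Qf :=
  ((measurable_fract.mul (measurable_const.sub measurable_fract)).div measurable_const)

/-- the Stirling error term -/
noncomputable def muz (z : ℂ) : ℂ := ∫ x in Ioi (0:ℝ), (Qf x : ℂ) / (z + x)^2

lemma normsq_lower (z : ℂ) (x : ℝ) : (x + z.re)^2 + z.im^2 ≤ ‖z + (x:ℂ)‖^2 := by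
  have : ‖z + (x:ℂ)‖^2 = (z.re + x)^2 + z.im^2 := by
    rw [Complex.sq_norm, Complex.normSq_apply]
    simp; ring
  rw [this]; ring_nf; exact le_refl _

lemma integrand_bound (z : ℂ) (x : ℝ) :
    ‖(Qf x : ℂ) / (z + x)^2‖ ≤ 8⁻¹ * ((x + z.re)^2 + z.im^2)⁻¹ ∨ z.im = 0 := by
  rcases eq_or_ne z.im 0 with h | h
  · exact Or.inr h
  left
  have hden : (0:ℝ) < (x + z.re)^2 + z.im^2 := by positivity
  have hle : (x + z.re)^2 + z.im^2 ≤ ‖z + (x:ℂ)‖^2 := normsq_lower z x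
  have hn : (0:ℝ) < ‖z + (x:ℂ)‖^2 := lt_of_lt_of_le hden hle
  rw [norm_div, norm_pow, Complex.norm_real]
  rw [div_le_iff₀ (by positivity), Real.norm_eq_abs, _root_.abs_of_nonneg (Qf_nonneg x)]
  calc Qf x ≤ 8⁻¹ := Qf_le x
    _ = 8⁻¹ * (((x + z.re)^2 + z.im^2)⁻¹ * ((x + z.re)^2 + z.im^2)) := by
        rw [inv_mul_cancel₀ hden.ne']; ring
    _ ≤ 8⁻¹ * (((x + z.re)^2 + z.im^2)⁻¹ * ‖z + (x:ℂ)‖^2) := by gcongr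
    _ = 8⁻¹ * ((x + z.re)^2 + z.im^2)⁻¹ * ‖z + (x:ℂ)‖^2 := by ring

lemma lorentz_integrable (c d : ℝ) (hd : d ≠ 0) :
    Integrable (fun x : ℝ => ((x + c)^2 + d^2)⁻¹) := by
  have h0 : Integrable (fun x : ℝ => (1 + x^2)⁻¹) := integrable_inv_one_add_sq
  have h1 : Integrable (fun x : ℝ => (1 + (x/d)^2)⁻¹) := h0.comp_div hd
  have h2 : Integrable (fun x : ℝ => (1 + ((x+c)/d)^2)⁻¹) := h1.comp_add_right c
  have h3 := h2.const_mul (d^2)⁻¹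
  exact h3.congr (Eventually.of_forall fun x => by field_simp; ring)

lemma lorentz_integral (c d : ℝ) (hd : 0 < d) :
    (∫ x : ℝ, ((x + c)^2 + d^2)⁻¹) = π / d := by
  have h1 : (∫ x : ℝ, (1 + ((x+c)/d)^2)⁻¹) = π * d := by
    rw [show (fun x : ℝ => (1 + ((x+c)/d)^2)⁻¹) = (fun x : ℝ => (fun y : ℝ => (1+(y/d)^2)⁻¹) (x + c)) from rfl]
    rw [MeasureTheory.integral_add_right_eq_self (fun y : ℝ => (1+(y/d)^2)⁻¹) c]
    rw [MeasureTheory.Measure.integral_comp_div (fun y : ℝ => (1+y^2)⁻¹) d]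
    rw [integral_univ_inv_one_add_sq]
    simp [abs_of_pos hd]; ring
  calc (∫ x : ℝ, ((x + c)^2 + d^2)⁻¹) = ∫ x : ℝ, (d^2)⁻¹ * (1 + ((x+c)/d)^2)⁻¹ := by
        congr 1; funext x; field_simp; ring
    _ = (d^2)⁻¹ * (π * d) := by rw [MeasureTheory.integral_const_mul, h1]
    _ = π / d := by field_simp

lemma muz_integrable (z : ℂ) (hz : 0 < z.im) :
    Integrable (fun x : ℝ => (Qf x : ℂ) / (z + x)^2) (volume.restrict (Ioi (0:ℝ))) := by
  have hmeas : AEStronglyMeasurable (fun x : ℝ => (Qf x : ℂ) / (z + x)^2)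
      (volume.restrict (Ioi (0:ℝ))) := by
    apply Measurable.aestronglyMeasurable
    exact (Complex.measurable_ofReal.comp Qf_measurable).div
      ((measurable_const.add Complex.measurable_ofReal).pow measurable_const)
  refine Integrable.mono' (((lorentz_integrable z.re z.im hz.ne').const_mul 8⁻¹).restrict) hmeas
    (Eventually.of_forall fun x => ?_)
  rcases integrand_bound z x with h | h
  · exact h
  · exact absurd h hz.ne'

lemma muz_bound (z : ℂ) (hz : 0 < z.im) : ‖muz z‖ ≤ π / (8 * z.im) := by
  have h1 : ‖muz z‖ ≤ ∫ x in Ioi (0:ℝ), 8⁻¹ * ((x + z.re)^2 + z.im^2)⁻¹ := by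
    refine norm_integral_le_of_norm_le (((lorentz_integrable z.re z.im hz.ne').const_mul 8⁻¹).restrict)
      (Eventually.of_forall fun x => ?_)
    rcases integrand_bound z x with h | h
    · exact h
    · exact absurd h hz.ne'
  have h2 : (∫ x in Ioi (0:ℝ), 8⁻¹ * ((x + z.re)^2 + z.im^2)⁻¹)
      ≤ ∫ x : ℝ, 8⁻¹ * ((x + z.re)^2 + z.im^2)⁻¹ := by
    apply setIntegral_le_integral (((lorentz_integrable z.re z.im hz.ne').const_mul 8⁻¹))
    exact Eventually.of_forall fun x => by positivity
  have h3 : (∫ x : ℝ, 8⁻¹ * ((x + z.re)^2 + z.im^2)⁻¹) = π / (8 * z.im) := by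
    rw [MeasureTheory.integral_const_mul, lorentz_integral z.re z.im hz]
    field_simp
  linarith


section part2
variable {z : ℂ}

lemma slit (hz : 0 < z.im) (x : ℝ) : z + (x:ℂ) ∈ Complex.slitPlane :=
  Or.inr (by simp [hz.ne'])

lemma zx_ne (hz : 0 < z.im) (x : ℝ) : z + (x:ℂ) ≠ 0 := by
  intro h
  have : (z + (x:ℂ)).im = 0 := by rw [h]; simp
  simp at this; exact hz.ne' this

lemma cont_log (hz : 0 < z.im) : Continuous (fun x : ℝ => Complex.log (z + x)) := by
  rw [continuous_iff_continuousAt]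
  intro x
  exact ContinuousAt.comp (continuousAt_clog (slit hz x))
    (f := fun x : ℝ => z + (x:ℂ)) (by fun_prop)

lemma cont_q (hz : 0 < z.im) (k : ℝ) :
    Continuous (fun x : ℝ => ((x:ℂ) - k) * (1 - ((x:ℂ) - k))/2 / (z + x)^2) := by
  apply Continuous.div (by fun_prop) (by fun_prop)
  intro x
  exact pow_ne_zero 2 (zx_ne hz x)

lemma hasDeriv_F (hz : 0 < z.im) (k : ℝ) (x : ℝ) :
    HasDerivAt (fun y : ℝ => ((y:ℂ) - k - 1/2) * Complex.log (z + y)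
        + (((y:ℂ) - k) * (1 - ((y:ℂ) - k))/2) * (z + y)⁻¹)
      (Complex.log (z + x) - ((x:ℂ) - k) * (1 - ((x:ℂ) - k))/2 / (z + x)^2) x := by
  have hne := zx_ne hz x
  have han : HasDerivAt (fun w : ℂ => z + w) 1 (x:ℂ) := by
    simpa using (hasDerivAt_id (x:ℂ)).const_add z
  have hlog : HasDerivAt (fun w : ℂ => Complex.log (z + w)) ((z + x)⁻¹) (x:ℂ) := by
    simpa [Function.comp_def] using (Complex.hasDerivAt_log (slit hz x)).comp (x:ℂ) han
  have hinv : HasDerivAt (fun w : ℂ => (z + w)⁻¹) (-1 / (z + x)^2) (x:ℂ) := by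
    simpa [Pi.inv_def] using han.inv hne
  have hl : HasDerivAt (fun w : ℂ => w - k - 1/2) 1 (x:ℂ) := by
    simpa using ((hasDerivAt_id (x:ℂ)).sub_const (k:ℂ)).sub_const (1/2 : ℂ)
  have hq : HasDerivAt (fun w : ℂ => (w - k) * (1 - (w - k))/2) ((1 - 2*((x:ℂ) - k))/2) (x:ℂ) := by
    have h1 : HasDerivAt (fun w : ℂ => w - k) 1 (x:ℂ) := by
      simpa using (hasDerivAt_id (x:ℂ)).sub_const (k:ℂ)
    have := (h1.fun_mul ((hasDerivAt_const (x:ℂ) (1:ℂ)).fun_sub h1)).div_const 2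
    exact this.congr_deriv (by ring)
  have total := ((hl.fun_mul hlog).fun_add (hq.fun_mul hinv)).comp_ofReal
  convert total using 1
  ring

lemma em_step (hz : 0 < z.im) (k : ℕ) :
    (∫ x in (k:ℝ)..(k+1:ℝ), Complex.log (z + x)) =
      (Complex.log (z + k) + Complex.log (z + (k+1:ℝ)))/2
        + ∫ x in (k:ℝ)..(k+1:ℝ), (Qf x : ℂ)/(z + x)^2 := by
  -- replace Qf by the polynomial on the interval
  have hcongr : (∫ x in (k:ℝ)..(k+1:ℝ), (Qf x : ℂ)/(z + x)^2)
      = ∫ x in (k:ℝ)..(k+1:ℝ), ((x:ℂ) - k) * (1 - ((x:ℂ) - k))/2 / (z + x)^2 := by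
    apply intervalIntegral.integral_congr_ae
    have hae : ∀ᵐ x : ℝ, x ≠ (k+1:ℝ) := by
      rw [ae_iff]
      simp only [not_not, Set.setOf_eq_eq_singleton]
      exact measure_singleton _
    filter_upwards [hae] with x hx hmem
    rw [Set.uIoc_of_le (by linarith : (k:ℝ) ≤ k+1)] at hmem
    have hx1 : (k:ℝ) ≤ x := hmem.1.le
    have hx2 : x < k+1 := lt_of_le_of_ne hmem.2 hx
    have hfr : Int.fract x = x - k := by
      rw [← Int.fract_sub_intCast x (k:ℤ)]
      rw [Int.fract_eq_self.mpr ⟨by push_cast; linarith, by push_cast; linarith⟩]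
      push_cast; ring
    unfold Qf
    rw [hfr]
    push_cast
    ring
  rw [hcongr]
  have hcont1 := cont_log hz
  have hcont2 := cont_q hz (k:ℝ)
  have hftc := intervalIntegral.integral_eq_sub_of_hasDerivAt
    (f := fun y : ℝ => ((y:ℂ) - (k:ℝ) - 1/2) * Complex.log (z + y)
        + (((y:ℂ) - (k:ℝ)) * (1 - ((y:ℂ) - (k:ℝ)))/2) * (z + y)⁻¹)
    (fun x _ => hasDeriv_F hz (k:ℝ) x)
    ((hcont1.sub hcont2).intervalIntegrable (k:ℝ) (k+1:ℝ))
  rw [intervalIntegral.integral_sub (hcont1.intervalIntegrable _ _) (hcont2.intervalIntegrable _ _)]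
    at hftc
  have hval : ((((k:ℝ)+1:ℝ):ℂ) - (k:ℝ) - 1/2) * Complex.log (z + ((k:ℝ)+1:ℝ))
        + (((((k:ℝ)+1:ℝ):ℂ) - (k:ℝ)) * (1 - ((((k:ℝ)+1:ℝ):ℂ) - (k:ℝ)))/2) * (z + ((k:ℝ)+1:ℝ))⁻¹
      - ((((k:ℝ):ℂ) - (k:ℝ) - 1/2) * Complex.log (z + (k:ℝ))
        + ((((k:ℝ):ℂ) - (k:ℝ)) * (1 - (((k:ℝ):ℂ) - (k:ℝ)))/2) * (z + (k:ℝ))⁻¹)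
      = (Complex.log (z + k) + Complex.log (z + (k+1:ℝ)))/2 := by
    push_cast
    ring
  rw [hval] at hftc
  have := sub_eq_iff_eq_add.mp hftc
  rw [this]
  push_cast
  ring
end part2

section part3
variable {z : ℂ}

lemma Qf_intervalIntegrable (hz : 0 < z.im) (a b : ℝ) :
    IntervalIntegrable (fun x : ℝ => (Qf x : ℂ)/(z + x)^2) volume a b := by
  have hmeas : AEStronglyMeasurable (fun x : ℝ => (Qf x : ℂ) / (z + x)^2)
      (volume.restrict (Set.uIoc a b)) :=
    (((Complex.measurable_ofReal.comp Qf_measurable).div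
      ((measurable_const.add Complex.measurable_ofReal).pow measurable_const))).aestronglyMeasurable
  refine IntervalIntegrable.mono_fun (intervalIntegrable_const (c := 8⁻¹ * (z.im^2)⁻¹)) hmeas
    (Eventually.of_forall fun x => ?_)
  rcases integrand_bound z x with h | h
  · refine h.trans ?_
    have h1 : (z.im^2)⁻¹ ≤ ((x + z.re)^2 + z.im^2)⁻¹ → False ∨ True := fun _ => Or.inr trivial
    have hb : ((x + z.re)^2 + z.im^2)⁻¹ ≤ (z.im^2)⁻¹ := by
      apply inv_anti₀ (by positivity)
      nlinarith [sq_nonneg (x + z.re)]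
    calc 8⁻¹ * ((x + z.re)^2 + z.im^2)⁻¹ ≤ 8⁻¹ * (z.im^2)⁻¹ := by
          have : (0:ℝ) ≤ 8⁻¹ := by norm_num
          exact mul_le_mul_of_nonneg_left hb this
      _ ≤ ‖8⁻¹ * (z.im^2)⁻¹‖ := le_abs_self _
  · exact absurd h hz.ne'

lemma half_sum (f : ℕ → ℂ) (n : ℕ) :
    ∑ k ∈ Finset.range n, (f k + f (k+1))/2
      = (∑ k ∈ Finset.range (n+1), f k) - (f 0 + f n)/2 := by
  induction n with
  | zero => simp
  | succ m ih =>
      rw [Finset.sum_range_succ, ih, Finset.sum_range_succ (n := m+1)]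
      ring

lemma sum_em (hz : 0 < z.im) (n : ℕ) :
    ∑ k ∈ Finset.range (n+1), Complex.log (z + k)
      = (∫ x in (0:ℝ)..(n:ℝ), Complex.log (z + x))
        + (Complex.log z + Complex.log (z + n))/2
        - ∫ x in (0:ℝ)..(n:ℝ), (Qf x : ℂ)/(z + x)^2 := by
  have h1 : ∑ k ∈ Finset.range n, ∫ x in ((k:ℕ):ℝ)..((k+1:ℕ):ℝ), Complex.log (z + x)
      = ∫ x in ((0:ℕ):ℝ)..((n:ℕ):ℝ), Complex.log (z + x) :=
    intervalIntegral.sum_integral_adjacent_intervals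
      (fun k _ => (cont_log hz).intervalIntegrable _ _)
  have h2 : ∑ k ∈ Finset.range n, ∫ x in ((k:ℕ):ℝ)..((k+1:ℕ):ℝ), (Qf x : ℂ)/(z + x)^2
      = ∫ x in ((0:ℕ):ℝ)..((n:ℕ):ℝ), (Qf x : ℂ)/(z + x)^2 :=
    intervalIntegral.sum_integral_adjacent_intervals
      (fun k _ => Qf_intervalIntegrable hz _ _)
  have h3 : ∀ k ∈ Finset.range n,
      (∫ x in ((k:ℕ):ℝ)..((k+1:ℕ):ℝ), Complex.log (z + x))
        = (Complex.log (z + k) + Complex.log (z + (k+1)))/2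
          + ∫ x in ((k:ℕ):ℝ)..((k+1:ℕ):ℝ), (Qf x : ℂ)/(z + x)^2 := by
    intro k _
    have := em_step hz k
    push_cast at this ⊢
    convert this using 3 <;> push_cast <;> ring
  rw [Finset.sum_congr rfl h3, Finset.sum_add_distrib, h2] at h1
  have h4 : ∑ k ∈ Finset.range n, (Complex.log (z + k) + Complex.log (z + (k+1)))/2
      = (∑ k ∈ Finset.range (n+1), Complex.log (z + k))
          - (Complex.log z + Complex.log (z + n))/2 := by
    have := half_sum (fun k => Complex.log (z + k)) n
    simp only [Nat.cast_zero, add_zero] at this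
    convert this using 3 <;> push_cast <;> ring
  rw [h4] at h1
  push_cast at h1 ⊢
  linear_combination h1

lemma integral_clog (hz : 0 < z.im) (n : ℕ) :
    (∫ x in (0:ℝ)..(n:ℝ), Complex.log (z + x))
      = (z + n) * Complex.log (z + n) - n - z * Complex.log z := by
  have hftc := intervalIntegral.integral_eq_sub_of_hasDerivAt
    (f := fun y : ℝ => (z + y) * Complex.log (z + y) - (z + y))
    (f' := fun y : ℝ => Complex.log (z + y)) ?_
    ((cont_log hz).intervalIntegrable (0:ℝ) (n:ℝ))
  · rw [hftc]
    push_cast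
    ring
  · intro x _
    have hne := zx_ne hz x
    have han : HasDerivAt (fun w : ℂ => z + w) 1 (x:ℂ) := by
      simpa using (hasDerivAt_id (x:ℂ)).const_add z
    have hlog : HasDerivAt (fun w : ℂ => Complex.log (z + w)) ((z + x)⁻¹) (x:ℂ) := by
      simpa [Function.comp_def] using (Complex.hasDerivAt_log (slit hz x)).comp (x:ℂ) han
    have total := (((han.fun_mul hlog).fun_sub han)).comp_ofReal
    exact total.congr_deriv (by rw [mul_inv_cancel₀ hne]; ring)

noncomputable def Lseq (z : ℂ) (n : ℕ) : ℂ :=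
  z * (Real.log n : ℂ) + ((Real.log (Nat.factorial n) : ℝ) : ℂ)
    - ∑ k ∈ Finset.range (n+1), Complex.log (z + k)

lemma gammaSeq_eq_exp (hz : 0 < z.im) (n : ℕ) (hn : 1 ≤ n) :
    Complex.GammaSeq z n = Complex.exp (Lseq z n) := by
  have hprod : Complex.exp (∑ k ∈ Finset.range (n+1), Complex.log (z + k))
      = ∏ k ∈ Finset.range (n+1), (z + k) := by
    rw [Complex.exp_sum]
    refine Finset.prod_congr rfl fun k _ => ?_
    refine Complex.exp_log ?_
    have := zx_ne hz (k:ℝ)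
    push_cast at this ⊢
    exact this
  have hnpos : (0:ℝ) < n := by exact_mod_cast hn
  have hpow : Complex.exp (z * (Real.log n : ℂ)) = (n:ℂ) ^ z := by
    rw [Complex.cpow_def_of_ne_zero (by exact_mod_cast hnpos.ne' : (n:ℂ) ≠ 0)]
    rw [← Complex.natCast_log, mul_comm]
  have hfac : Complex.exp ((Real.log (Nat.factorial n) : ℝ) : ℂ) = ((Nat.factorial n : ℕ) : ℂ) := by
    rw [← Complex.ofReal_exp, Real.exp_log (by positivity)]
    push_cast; rfl
  rw [Lseq, sub_eq_add_neg, Complex.exp_add, Complex.exp_add, Complex.exp_neg, hprod, hpow, hfac]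
  rw [Complex.GammaSeq]
  field_simp
end part3

section part4
variable {z : ℂ}

noncomputable def epsSeq (n : ℕ) : ℝ :=
  Real.log (Nat.factorial n) - (((n:ℝ) + 1/2) * Real.log n - n + Real.log (2*π)/2)

lemma eps_tendsto : Tendsto epsSeq atTop (𝓝 0) := by
  have hπ : (0:ℝ) < π := Real.pi_pos
  have hst : Tendsto (fun n : ℕ => Real.log (Stirling.stirlingSeq n) - Real.log π / 2)
      atTop (𝓝 0) := by
    have h0 : Tendsto (fun n : ℕ => Real.log (Stirling.stirlingSeq n)) atTop
        (𝓝 (Real.log (Real.sqrt π))) :=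
      ((Real.continuousAt_log (Real.sqrt_pos.mpr hπ).ne').tendsto).comp
        Stirling.tendsto_stirlingSeq_sqrt_pi
    have h1 := h0.sub_const (Real.log π / 2)
    rw [Real.log_sqrt hπ.le] at h1
    simpa using h1
  refine hst.congr' ?_
  filter_upwards [eventually_ge_atTop 1] with n hn
  have hn0 : (0:ℝ) < n := by exact_mod_cast hn
  have hf := Stirling.log_stirlingSeq_formula n
  have h2n : Real.log (2*(n:ℝ)) = Real.log 2 + Real.log n := Real.log_mul (by norm_num) hn0.ne'
  have hne : Real.log ((n:ℝ) / Real.exp 1) = Real.log n - 1 := by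
    rw [Real.log_div hn0.ne' (Real.exp_ne_zero 1), Real.log_exp]
  have h2π : Real.log (2*π) = Real.log 2 + Real.log π := Real.log_mul (by norm_num) hπ.ne'
  rw [epsSeq, hf, h2n, hne, h2π]
  ring

lemma log_one_add_tendsto : Tendsto (fun n : ℕ => Complex.log (1 + z/n)) atTop (𝓝 0) := by
  apply squeeze_zero_norm' (a := fun n : ℕ => 3/2 * (‖z‖ / n))
  · filter_upwards [eventually_ge_atTop (max 1 (Nat.ceil (2*‖z‖)))] with n hn
    have hn1 : 1 ≤ n := le_trans (le_max_left _ _) hn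
    have hn0 : (0:ℝ) < n := by exact_mod_cast hn1
    have hnz : 2*‖z‖ ≤ n := le_trans (Nat.le_ceil _) (by exact_mod_cast le_trans (le_max_right _ _) hn)
    have hw : ‖z/(n:ℂ)‖ ≤ 1/2 := by
      rw [norm_div]
      have hnn : ‖((n:ℕ):ℂ)‖ = (n:ℝ) := by simp
      rw [hnn, div_le_iff₀ hn0]
      linarith
    have := Complex.norm_log_one_add_half_le_self hw
    refine this.trans ?_
    rw [norm_div]
    simp
  · have : Tendsto (fun n : ℕ => ‖z‖ / n) atTop (𝓝 0) := tendsto_const_div_atTop_nhds_zero_nat ‖z‖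
    simpa using this.const_mul (3/2 : ℝ)

lemma n_log_one_add_tendsto : Tendsto (fun n : ℕ => (n:ℂ) * Complex.log (1 + z/n)) atTop (𝓝 z) := by
  have key : Tendsto (fun n : ℕ => (n:ℂ) * Complex.log (1 + z/n) - z) atTop (𝓝 0) := by
    apply squeeze_zero_norm' (a := fun n : ℕ => ‖z‖^2 / n)
    · filter_upwards [eventually_ge_atTop (max 1 (Nat.ceil (2*‖z‖)))] with n hn
      have hn1 : 1 ≤ n := le_trans (le_max_left _ _) hn
      have hn0 : (0:ℝ) < n := by exact_mod_cast hn1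
      have hnC : (n:ℂ) ≠ 0 := by exact_mod_cast (by positivity : (0:ℝ) < n).ne'
      have hnz : 2*‖z‖ ≤ n := le_trans (Nat.le_ceil _) (by exact_mod_cast le_trans (le_max_right _ _) hn)
      have hw : ‖z/(n:ℂ)‖ ≤ 1/2 := by
        rw [norm_div]
        have hnn0 : ‖((n:ℕ):ℂ)‖ = (n:ℝ) := by simp
        rw [hnn0, div_le_iff₀ hn0]
        linarith
      have hw1 : ‖z/(n:ℂ)‖ < 1 := lt_of_le_of_lt hw (by norm_num)
      have hlog := Complex.norm_log_one_add_sub_self_le hw1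
      have heq : (n:ℂ) * Complex.log (1 + z/n) - z
          = (n:ℂ) * (Complex.log (1 + z/n) - z/n) := by
        rw [mul_sub, mul_div_cancel₀ _ hnC]
      rw [heq, norm_mul]
      have hnn : ‖(n:ℂ)‖ = (n:ℝ) := by
        simp
      rw [hnn]
      have hb : ‖Complex.log (1 + z/n) - z/n‖ ≤ ‖z‖^2/(n:ℝ)^2 := by
        refine hlog.trans ?_
        have h1 : (1 - ‖z/(n:ℂ)‖)⁻¹ ≤ 2 := by
          rw [inv_le_comm₀ (by linarith) (by norm_num)]
          linarith
        have h2 : ‖z/(n:ℂ)‖^2 = ‖z‖^2/(n:ℝ)^2 := by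
          rw [norm_div, hnn, div_pow]
        calc ‖z/(n:ℂ)‖ ^ 2 * (1 - ‖z/(n:ℂ)‖)⁻¹ / 2 ≤ ‖z/(n:ℂ)‖^2 * 2 / 2 := by
              have : (0:ℝ) ≤ ‖z/(n:ℂ)‖^2 := by positivity
              gcongr
          _ = ‖z/(n:ℂ)‖^2 := by ring
          _ = ‖z‖^2/(n:ℝ)^2 := h2
      calc (n:ℝ) * ‖Complex.log (1 + z/n) - z/n‖ ≤ (n:ℝ) * (‖z‖^2/(n:ℝ)^2) := by
            have : (0:ℝ) ≤ n := hn0.le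
            gcongr
        _ = ‖z‖^2 / n := by field_simp
    · exact tendsto_const_div_atTop_nhds_zero_nat (‖z‖^2)
  have := key.add_const z
  simpa using this

lemma Lseq_tendsto (hz : 0 < z.im) :
    Tendsto (fun n : ℕ => Lseq z n) atTop
      (𝓝 ((z - 1/2) * Complex.log z - z + ((Real.log (2*π))/2 : ℝ) + muz z)) := by
  have hQ : Tendsto (fun n : ℕ => ∫ x in (0:ℝ)..(n:ℝ), (Qf x : ℂ)/(z+x)^2) atTop (𝓝 (muz z)) :=
    intervalIntegral_tendsto_integral_Ioi 0 (muz_integrable z hz) tendsto_natCast_atTop_atTop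
  have hA : Tendsto (fun n : ℕ => (z + n + 1/2) * Complex.log (1 + z/n)) atTop (𝓝 z) := by
    have h1 : Tendsto (fun n : ℕ => (z + 1/2) * Complex.log (1 + z/n)) atTop (𝓝 0) := by
      have := log_one_add_tendsto (z := z).const_mul (z + 1/2)
      simpa using this
    have h2 := n_log_one_add_tendsto (z := z)
    have h3 := h1.add h2
    rw [zero_add] at h3
    refine h3.congr fun n => ?_
    ring
  have hε : Tendsto (fun n : ℕ => ((epsSeq n : ℝ) : ℂ)) atTop (𝓝 0) := by
    have := (Complex.continuous_ofReal.tendsto 0).comp eps_tendsto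
    simpa [Function.comp_def] using this
  have hcomb := (hε.sub hA).add hQ
  rw [zero_sub] at hcomb
  have hfinal := hcomb.const_add ((z - 1/2) * Complex.log z + ((Real.log (2*π))/2 : ℝ))
  have hlim : (z - 1/2) * Complex.log z + ((Real.log (2*π))/2 : ℝ) + (-z + muz z)
      = (z - 1/2) * Complex.log z - z + ((Real.log (2*π))/2 : ℝ) + muz z := by ring
  rw [hlim] at hfinal
  refine hfinal.congr' ?_
  filter_upwards [eventually_ge_atTop 1] with n hn
  have hn0 : (0:ℝ) < n := by exact_mod_cast hn
  have hnC : ((n:ℝ):ℂ) ≠ 0 := by exact_mod_cast hn0.ne'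
  have hsum := sum_em hz n
  have hint := integral_clog hz n
  have hsplit : Complex.log (z + n) = (Real.log n : ℂ) + Complex.log (1 + z/n) := by
    have hne1 : (1 + z/(n:ℂ)) ≠ 0 := by
      intro h
      have : (1 + z/(n:ℂ)).im = 0 := by rw [h]; simp
      rw [Complex.add_im, Complex.one_im] at this
      have him : (z/(n:ℂ)).im = z.im / n := by
        rw [Complex.div_im]
        simp [Complex.normSq_apply]
        field_simp
      rw [him] at this
      have : z.im = 0 := by
        field_simp at this
        simpa using this
      exact hz.ne' this
    have := Complex.log_ofReal_mul (r := (n:ℝ)) hn0 (x := 1 + z/n) hne1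
    have harg : ((n:ℝ):ℂ) * (1 + z/(n:ℂ)) = z + n := by
      have hcc : ((n:ℝ):ℂ) = ((n:ℕ):ℂ) := by push_cast; rfl
      rw [hcc, mul_add, mul_one, mul_div_cancel₀ z (by exact_mod_cast hn0.ne' : ((n:ℕ):ℂ) ≠ 0)]
      ring
    rw [harg] at this
    rw [this]
  have hfac : ((Real.log (Nat.factorial n) : ℝ) : ℂ)
      = ((n:ℂ) + 1/2) * (Real.log n : ℂ) - n + ((Real.log (2*π))/2 : ℝ) + (epsSeq n : ℂ) := by
    have : (epsSeq n : ℝ) = Real.log (Nat.factorial n)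
        - (((n:ℝ) + 1/2) * Real.log n - n + Real.log (2*π)/2) := rfl
    rw [this]
    push_cast
    ring
  rw [Lseq, hsum, hint, hsplit, hfac]
  push_cast
  ring

theorem Gamma_stirling (hz : 0 < z.im) :
    Complex.Gamma z
      = Complex.exp ((z - 1/2) * Complex.log z - z + ((Real.log (2*π))/2 : ℝ) + muz z) := by
  have h1 := Complex.GammaSeq_tendsto_Gamma z
  have h2 : Tendsto (fun n : ℕ => Complex.exp (Lseq z n)) atTop
      (𝓝 (Complex.exp ((z - 1/2) * Complex.log z - z + ((Real.log (2*π))/2 : ℝ) + muz z))) :=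
    (Complex.continuous_exp.tendsto _).comp (Lseq_tendsto hz)
  refine tendsto_nhds_unique ?_ h2
  refine h1.congr' ?_
  filter_upwards [eventually_ge_atTop 1] with n hn
  exact gammaSeq_eq_exp hz n hn
end part4

section part5

lemma log_I_mul (t : ℝ) (ht : 0 < t) :
    Complex.log (I * t) = (Real.log t : ℂ) + (π/2) * I := by
  have habs : ‖I * t‖ = t := by
    rw [norm_mul, Complex.norm_I, one_mul, Complex.norm_real, Real.norm_eq_abs, abs_of_pos ht]
  have harg : Complex.arg (I * t) = π/2 := by
    rw [Complex.arg_eq_pi_div_two_iff]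
    constructor
    · simp
    · simp [ht]
  apply Complex.ext
  · rw [Complex.log_re, habs]; simp
  · rw [Complex.log_im, harg]; simp

lemma re_one_add (t : ℝ) (ht : 0 < t) (u : ℂ) :
    (1 + u / (I * t)).re = 1 + u.im / t := by
  rw [Complex.add_re, Complex.one_re, Complex.div_re]
  simp [Complex.normSq_apply]
  field_simp

lemma log_split (t : ℝ) (ht : 0 < t) (u : ℂ) (hu : ‖u‖ < t/2) :
    Complex.log (I * t + u)
      = ((Real.log t : ℂ) + (π/2) * I) + Complex.log (1 + u / (I * t)) := by
  have htC : ((t:ℝ):ℂ) ≠ 0 := by exact_mod_cast ht.ne'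
  have hx : (I * (t:ℂ)) ≠ 0 := mul_ne_zero Complex.I_ne_zero htC
  have hyre : 0 < (1 + u / (I * t)).re := by
    rw [re_one_add t ht u]
    have h1 : |u.im| ≤ ‖u‖ := Complex.abs_im_le_norm u
    have h2 : |u.im / t| < 1/2 := by
      rw [abs_div, abs_of_pos ht, div_lt_iff₀ ht]
      calc |u.im| ≤ ‖u‖ := h1
        _ < t/2 := hu
        _ = 1/2 * t := by ring
    have := (abs_lt.mp h2).1
    linarith
  have hy : (1 + u / (I * t)) ≠ 0 := by
    intro h
    rw [h] at hyre
    simp at hyre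
  have hargx : Complex.arg (I * t) = π/2 := by
    rw [Complex.arg_eq_pi_div_two_iff]
    exact ⟨by simp, by simp [ht]⟩
  have hargy : |Complex.arg (1 + u / (I * t))| < π/2 :=
    Complex.abs_arg_lt_pi_div_two_iff.mpr (Or.inl hyre)
  have hmem : Complex.arg (I * t) + Complex.arg (1 + u / (I * t)) ∈ Set.Ioc (-π) π := by
    rw [hargx]
    have := abs_lt.mp hargy
    have hπ := Real.pi_pos
    constructor <;> [linarith [this.1]; linarith [this.2]]
  have hxy : I * (t:ℂ) + u = (I * t) * (1 + u / (I * t)) := by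
    rw [mul_add, mul_one, mul_div_cancel₀ u hx]
  rw [hxy, Complex.log_mul hx hy hmem, log_I_mul t ht]

lemma key_bound (t M : ℝ) (hM : 1 ≤ M) (ht2 : 2*M ≤ t) (ht1 : M + 1 ≤ t)
    (u : ℂ) (hu : ‖u‖ ≤ M) :
    ‖(I*t + u - 1/2) * Complex.log (1 + u/(I*t)) - u‖ ≤ 4*M^2/t := by
  have ht0 : (0:ℝ) < t := by linarith
  have htC : ((t:ℝ):ℂ) ≠ 0 := by exact_mod_cast ht0.ne'
  have hx : (I * (t:ℂ)) ≠ 0 := mul_ne_zero Complex.I_ne_zero htC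
  have hIt : ‖I * (t:ℂ)‖ = t := by
    rw [norm_mul, Complex.norm_I, one_mul, Complex.norm_real, Real.norm_eq_abs, abs_of_pos ht0]
  have hwn : ‖u/(I*t)‖ = ‖u‖/t := by rw [norm_div, hIt]
  have hw2 : ‖u/(I*t)‖ ≤ 1/2 := by
    rw [hwn, div_le_iff₀ ht0]
    calc ‖u‖ ≤ M := hu
      _ ≤ 1/2 * t := by linarith
  have hw1 : ‖u/(I*t)‖ < 1 := lt_of_le_of_lt hw2 (by norm_num)
  have hlog := Complex.norm_log_one_add_sub_self_le hw1
  have h2 : ‖u/(I*(t:ℂ))‖ ≤ M/t := by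
    rw [hwn]; gcongr
  have hlog2 : ‖Complex.log (1 + u/(I*t)) - u/(I*t)‖ ≤ (M/t)^2 := by
    refine hlog.trans ?_
    have h1 : (1 - ‖u/(I*(t:ℂ))‖)⁻¹ ≤ 2 := by
      rw [inv_le_comm₀ (by linarith) (by norm_num)]
      linarith
    have h3 : (0:ℝ) ≤ (1 - ‖u/(I*(t:ℂ))‖)⁻¹ := by
      apply inv_nonneg.mpr; linarith
    have h0 : (0:ℝ) ≤ ‖u/(I*(t:ℂ))‖ := norm_nonneg _
    have hMt : (0:ℝ) ≤ M/t := by positivity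
    nlinarith [mul_le_mul h2 h2 h0 hMt,
      mul_le_mul_of_nonneg_left h1 (sq_nonneg ‖u/(I*(t:ℂ))‖)]
  have hcancel : (I*(t:ℂ)) * (u/(I*t)) = u := mul_div_cancel₀ u hx
  have hdecomp : (I*t + u - 1/2) * Complex.log (1 + u/(I*t)) - u
      = (I*t + u - 1/2) * (Complex.log (1 + u/(I*t)) - u/(I*t)) + (u - 1/2) * (u/(I*t)) := by
    linear_combination hcancel
  rw [hdecomp]
  have hzb : ‖I*(t:ℂ) + u - 1/2‖ ≤ 2*t := by
    calc ‖I*(t:ℂ) + u - 1/2‖ ≤ ‖I*(t:ℂ) + u‖ + ‖(1/2 : ℂ)‖ := norm_sub_le _ _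
      _ ≤ ‖I*(t:ℂ)‖ + ‖u‖ + ‖(1/2 : ℂ)‖ := by gcongr; exact norm_add_le _ _
      _ ≤ t + M + 1 := by
          rw [hIt]
          have : ‖(1/2 : ℂ)‖ ≤ 1 := by norm_num
          linarith
      _ ≤ 2*t := by linarith
  calc ‖(I*t + u - 1/2) * (Complex.log (1 + u/(I*t)) - u/(I*t)) + (u - 1/2) * (u/(I*t))‖
      ≤ ‖(I*t + u - 1/2)‖ * ‖Complex.log (1 + u/(I*t)) - u/(I*t)‖ + ‖u - 1/2‖ * ‖u/(I*t)‖ := by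
        refine (norm_add_le _ _).trans ?_
        rw [norm_mul, norm_mul]
    _ ≤ (2*t) * (M/t)^2 + (M+1) * (M/t) := by
        have b2 : ‖u - (1/2:ℂ)‖ ≤ M + 1 := by
          have hhalf : ‖(1/2 : ℂ)‖ ≤ 1 := by
            rw [norm_div, norm_one]
            simp
            norm_num
          calc ‖u - (1/2:ℂ)‖ ≤ ‖u‖ + ‖(1/2:ℂ)‖ := norm_sub_le _ _
            _ ≤ M + 1 := by linarith
        have g1 : ‖I*(t:ℂ)+u-1/2‖ * ‖Complex.log (1 + u/(I*t)) - u/(I*t)‖ ≤ (2*t)*((M/t)^2) :=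
          mul_le_mul hzb hlog2 (norm_nonneg _) (by positivity)
        have g2 : ‖u - (1/2:ℂ)‖ * ‖u/(I*(t:ℂ))‖ ≤ (M+1)*(M/t) :=
          mul_le_mul b2 h2 (norm_nonneg _) (by linarith)
        exact add_le_add g1 g2
    _ ≤ 4*M^2/t := by
        have ht0' : (0:ℝ) < t := ht0
        have e1 : 2*t * (M/t)^2 = 2*M^2/t := by field_simp
        have e2 : (M+1)*(M/t) = (M+1)*M/t := by ring
        rw [e1, e2, ← add_div]
        gcongr
        nlinarith
end part5

set_option maxHeartbeats 2000000 in
/-- Leading term of the Stirling asymptotic (3.12): for `s` in a fixed vertical strip with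
`t = Im s → +∞` and `r` bounded,
`Γ(s+ir)Γ(s−ir) = −2πi t^{2σ−1+2it} e^{πiσ−2it−πt} (1 + O(1/t))`. -/
theorem stmt7 (a b R : ℝ) (hab : a ≤ b) (hR : 0 < R) :
    ∃ C > (0:ℝ), ∃ T₀ > (1:ℝ), ∀ s r : ℂ,
      a ≤ s.re → s.re ≤ b → ‖r‖ ≤ R → T₀ ≤ s.im →
      ∃ E : ℂ,
        Complex.Gamma (s + I * r) * Complex.Gamma (s - I * r)
          = (-2 * π * I) * (s.im : ℂ) ^ ((2 * s.re - 1 : ℂ) + 2 * I * s.im) *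
              Complex.exp (π * I * s.re - 2 * I * s.im - π * s.im) * (1 + E) ∧
        ‖E‖ ≤ C / s.im := by
  have hmax0 : (0:ℝ) ≤ max |a| |b| := le_trans (abs_nonneg a) (le_max_left _ _)
  set M : ℝ := max |a| |b| + R + 1 with hMdef
  have hM1 : 1 ≤ M := by simp only [hMdef]; linarith
  set C₀ : ℝ := 8*M^2 + 2 with hC₀def
  have hC₀pos : 0 < C₀ := by positivity
  refine ⟨2*C₀, by positivity, 2*M + 2*R + C₀ + 2, by nlinarith, ?_⟩
  intro s r ha hb hr ht
  set t : ℝ := s.im with htdef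
  have ht0 : (0:ℝ) < t := by nlinarith
  have htM : 2*M ≤ t := by nlinarith
  have htM1 : M + 1 ≤ t := by nlinarith
  have htR : 2*R ≤ t := by nlinarith
  have htC₀ : C₀ ≤ t := by nlinarith
  have hct : ((t:ℝ):ℂ) = ((s.im:ℝ):ℂ) := by rw [htdef]
  have hsre : |s.re| ≤ max |a| |b| := by
    rw [abs_le]
    constructor
    · calc -(max |a| |b|) ≤ -|a| := by simp [le_max_left]
        _ ≤ a := neg_abs_le a
        _ ≤ s.re := ha
    · calc s.re ≤ b := hb
        _ ≤ |b| := le_abs_self b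
        _ ≤ max |a| |b| := le_max_right _ _
  have hu1 : ‖(s.re:ℂ) + I*r‖ ≤ M := by
    calc ‖(s.re:ℂ) + I*r‖ ≤ ‖(s.re:ℂ)‖ + ‖I*r‖ := norm_add_le _ _
      _ = |s.re| + ‖r‖ := by
          rw [Complex.norm_real, Real.norm_eq_abs, norm_mul, Complex.norm_I, one_mul]
      _ ≤ max |a| |b| + R := add_le_add hsre hr
      _ ≤ M := by simp only [hMdef]; linarith
  have hu2 : ‖(s.re:ℂ) - I*r‖ ≤ M := by
    calc ‖(s.re:ℂ) - I*r‖ ≤ ‖(s.re:ℂ)‖ + ‖I*r‖ := norm_sub_le _ _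
      _ = |s.re| + ‖r‖ := by
          rw [Complex.norm_real, Real.norm_eq_abs, norm_mul, Complex.norm_I, one_mul]
      _ ≤ max |a| |b| + R := add_le_add hsre hr
      _ ≤ M := by simp only [hMdef]; linarith
  have hrre : |r.re| ≤ R := le_trans (Complex.abs_re_le_norm r) hr
  obtain ⟨hrre1, hrre2⟩ := abs_le.mp hrre
  have hsT : (s:ℂ) = (s.re:ℂ) + (t:ℂ)*I := by
    rw [htdef]
    exact (Complex.re_add_im s).symm
  have hz1 : s + I*r = I*(t:ℂ) + ((s.re:ℂ) + I*r) := by linear_combination hsT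
  have hz2 : s - I*r = I*(t:ℂ) + ((s.re:ℂ) - I*r) := by linear_combination hsT
  have him1 : (s + I*r).im = t + r.re := by
    simp [Complex.add_im, Complex.mul_im, htdef]
  have him2 : (s - I*r).im = t - r.re := by
    simp [Complex.sub_im, Complex.mul_im, htdef]
  have him1pos : 0 < (s + I*r).im := by rw [him1]; nlinarith
  have him2pos : 0 < (s - I*r).im := by rw [him2]; nlinarith
  have hG1 := Gamma_stirling him1pos
  have hG2 := Gamma_stirling him2pos
  have hlt1 : ‖(s.re:ℂ) + I*r‖ < t/2 := lt_of_le_of_lt hu1 (by nlinarith)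
  have hlt2 : ‖(s.re:ℂ) - I*r‖ < t/2 := lt_of_le_of_lt hu2 (by nlinarith)
  have hsplit1 : Complex.log (s + I*r)
      = ((Real.log t : ℂ) + (π/2) * I) + Complex.log (1 + ((s.re:ℂ) + I*r) / (I * t)) := by
    rw [hz1]; exact log_split t ht0 _ hlt1
  have hsplit2 : Complex.log (s - I*r)
      = ((Real.log t : ℂ) + (π/2) * I) + Complex.log (1 + ((s.re:ℂ) - I*r) / (I * t)) := by
    rw [hz2]; exact log_split t ht0 _ hlt2
  set W₁ : ℂ := (s + I*r - 1/2) * Complex.log (s + I*r) - (s + I*r)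
      + ((Real.log (2*π))/2 : ℝ) + muz (s + I*r) with hW₁
  set W₂ : ℂ := (s - I*r - 1/2) * Complex.log (s - I*r) - (s - I*r)
      + ((Real.log (2*π))/2 : ℝ) + muz (s - I*r) with hW₂
  set V : ℂ := ((Real.log (2*π) : ℝ) : ℂ) + (-((π:ℂ)/2) * I)
      + (Real.log t : ℂ) * ((2 * (s.re:ℂ) - 1) + 2*I*(t:ℂ))
      + ((π:ℂ) * I * (s.re:ℂ) - 2*I*(t:ℂ) - (π:ℂ)*(t:ℂ)) with hV
  have hexpV : (-2 * (π:ℂ) * I) * (t : ℂ) ^ ((2 * (s.re:ℂ) - 1) + 2 * I * (t:ℂ)) *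
      Complex.exp ((π:ℂ) * I * (s.re:ℂ) - 2 * I * (t:ℂ) - (π:ℂ) * (t:ℂ)) = Complex.exp V := by
    have h2π : Complex.exp ((Real.log (2*π) : ℝ) : ℂ) = 2*(π:ℂ) := by
      rw [← Complex.ofReal_exp, Real.exp_log (by positivity)]
      push_cast; ring
    have hmI : Complex.exp (-((π:ℂ)/2) * I) = -I := by
      rw [Complex.exp_mul_I]
      have hc : Complex.cos (-((π:ℂ)/2)) = 0 := by
        rw [Complex.cos_neg]
        have h' : ((π:ℂ)/2) = ((π/2 : ℝ) : ℂ) := by push_cast; ring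
        rw [h', ← Complex.ofReal_cos, Real.cos_pi_div_two]
        simp
      have hs' : Complex.sin (-((π:ℂ)/2)) = -1 := by
        rw [Complex.sin_neg]
        have h' : ((π:ℂ)/2) = ((π/2 : ℝ) : ℂ) := by push_cast; ring
        rw [h', ← Complex.ofReal_sin, Real.sin_pi_div_two]
        simp
      rw [hc, hs']
      ring
    have hcpow : (t : ℂ) ^ ((2 * (s.re:ℂ) - 1) + 2 * I * (t:ℂ))
        = Complex.exp ((Real.log t : ℂ) * ((2 * (s.re:ℂ) - 1) + 2 * I * (t:ℂ))) := by
      rw [Complex.cpow_def_of_ne_zero (by exact_mod_cast ht0.ne' : ((t:ℝ):ℂ) ≠ 0)]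
      rw [Complex.ofReal_log ht0.le]
    rw [hV, Complex.exp_add, Complex.exp_add, Complex.exp_add, h2π, hcpow, hmI]
    ring
  refine ⟨Complex.exp (W₁ + W₂ - V) - 1, ?_, ?_⟩
  · rw [hG1, hG2, ← Complex.exp_add]
    have h1E : (1:ℂ) + (Complex.exp (W₁ + W₂ - V) - 1) = Complex.exp (W₁ + W₂ - V) := by ring
    rw [h1E, hexpV, ← Complex.exp_add]
    congr 1
    rw [hW₁, hW₂]
    ring
  · have hkey : W₁ + W₂ - V
        = ((I*(t:ℂ) + ((s.re:ℂ) + I*r) - 1/2)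
              * Complex.log (1 + ((s.re:ℂ) + I*r)/(I*(t:ℂ))) - ((s.re:ℂ) + I*r))
          + ((I*(t:ℂ) + ((s.re:ℂ) - I*r) - 1/2)
              * Complex.log (1 + ((s.re:ℂ) - I*r)/(I*(t:ℂ))) - ((s.re:ℂ) - I*r))
          + muz (s + I*r) + muz (s - I*r) := by
      rw [hW₁, hW₂, hV, hsplit1, hsplit2, hz1, hz2]
      have hI2 : (I:ℂ)^2 = -1 := Complex.I_sq
      push_cast
      rw [hsT]
      linear_combination (π:ℂ)*(t:ℂ) * hI2
    have hb1 := key_bound t M hM1 htM htM1 _ hu1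
    have hb2 := key_bound t M hM1 htM htM1 _ hu2
    have h4 : π ≤ 4 := Real.pi_le_four
    have hmu1 : ‖muz (s + I*r)‖ ≤ 1/t := by
      refine (muz_bound _ him1pos).trans ?_
      rw [him1]
      have hpos : 0 < 8*(t + r.re) := by nlinarith
      rw [div_le_div_iff₀ hpos ht0]
      nlinarith
    have hmu2 : ‖muz (s - I*r)‖ ≤ 1/t := by
      refine (muz_bound _ him2pos).trans ?_
      rw [him2]
      have hpos : 0 < 8*(t - r.re) := by nlinarith
      rw [div_le_div_iff₀ hpos ht0]
      nlinarith
    have hineq : ‖W₁ + W₂ - V‖ ≤ C₀/t := by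
      rw [hkey]
      have step : ‖((I*(t:ℂ) + ((s.re:ℂ) + I*r) - 1/2)
              * Complex.log (1 + ((s.re:ℂ) + I*r)/(I*(t:ℂ))) - ((s.re:ℂ) + I*r))
          + ((I*(t:ℂ) + ((s.re:ℂ) - I*r) - 1/2)
              * Complex.log (1 + ((s.re:ℂ) - I*r)/(I*(t:ℂ))) - ((s.re:ℂ) - I*r))
          + muz (s + I*r) + muz (s - I*r)‖
          ≤ 4*M^2/t + 4*M^2/t + 1/t + 1/t := by
        refine (norm_add_le _ _).trans ?_
        refine add_le_add (le_trans (norm_add_le _ _) (add_le_add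
          (le_trans (norm_add_le _ _) (add_le_add hb1 hb2)) hmu1)) hmu2
      refine step.trans (le_of_eq ?_)
      rw [hC₀def]
      field_simp
      ring
    have hle1 : ‖W₁ + W₂ - V‖ ≤ 1 := by
      refine hineq.trans ?_
      rw [div_le_one ht0]
      exact htC₀
    have habs := Complex.norm_exp_sub_one_le (x := W₁ + W₂ - V) hle1
    calc ‖Complex.exp (W₁ + W₂ - V) - 1‖
        ≤ 2 * ‖W₁ + W₂ - V‖ := habs
      _ ≤ 2 * (C₀/t) := by linarith
      _ = 2*C₀/t := by ring
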